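/- Let N ≥ 2 and let σ₀ = I₂, σz = [[1,0],[0,−1]], σx = [[0,1],[1,0]], σy = [[0,−i],[i,0]]. For real numbers a, b, c define the generalized Smolin state ρ = 2^{−N}·(σ₀^{⊗N} + a·σz^{⊗N} + b·σx^{⊗N} + c·σy^{⊗N}), where M^{⊗N} denotes the N-fold Kronecker power, a matrix indexed by functions f, g : Fin N → Fin 2. Then ρ belongs to the convex hull (over ℝ) of the set of N-qubit pure product states {⊗_{j=1}^N v_j v_j† : v_j ∈ ℂ², ‖v_j‖ = 1} if and only if |a| + |b| + |c| ≤ 1. -/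

import Mathlib

open scoped ComplexConjugate

/-- The `N`-fold Kronecker power of a `2×2` matrix, indexed by functions
`Fin N → Fin 2`. -/
def kronPow {N : ℕ} (M : Matrix (Fin 2) (Fin 2) ℂ) :
    Matrix (Fin N → Fin 2) (Fin N → Fin 2) ℂ :=
  Matrix.of fun f g => ∏ j, M (f j) (g j)

namespace GenSmolin

lemma sum_sum_prod {N : ℕ} (F : Fin N → Fin 2 → Fin 2 → ℂ) :
    ∑ g : Fin N → Fin 2, ∑ h : Fin N → Fin 2, ∏ j, F j (g j) (h j)
      = ∏ j, ∑ s, ∑ t, F j s t := by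
  have h1 : ∀ g : Fin N → Fin 2,
      ∑ h : Fin N → Fin 2, ∏ j, F j (g j) (h j) = ∏ j, ∑ t, F j (g j) t := by
    intro g
    rw [Finset.prod_univ_sum (fun _ => Finset.univ) (fun j t => F j (g j) t)]
    simp [Fintype.piFinset_univ]
  simp_rw [h1]
  rw [Finset.prod_univ_sum (fun _ => Finset.univ) (fun j s => ∑ t, F j s t)]
  simp [Fintype.piFinset_univ]

/-- The pure product state matrix associated to vectors `v j`. -/
def pureMat {N : ℕ} (v : Fin N → Fin 2 → ℂ) :
    Matrix (Fin N → Fin 2) (Fin N → Fin 2) ℂ :=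
  Matrix.of fun f g => ∏ j, v j (f j) * conj (v j (g j))

def pureSet (N : ℕ) : Set (Matrix (Fin N → Fin 2) (Fin N → Fin 2) ℂ) :=
  {M | ∃ v : Fin N → Fin 2 → ℂ,
      (∀ j, ∑ i, ‖v j i‖ ^ 2 = 1) ∧
      M = Matrix.of fun f g => ∏ j, v j (f j) * conj (v j (g j))}

lemma trace_kron_mul {N : ℕ} (A B : Matrix (Fin 2) (Fin 2) ℂ) :
    (kronPow (N := N) A * kronPow B).trace = ((A * B).trace) ^ N := by
  have h : (kronPow (N := N) A * kronPow B).trace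
      = ∑ g : Fin N → Fin 2, ∑ h : Fin N → Fin 2, ∏ j, A (g j) (h j) * B (h j) (g j) := by
    rw [Matrix.trace]
    simp only [Matrix.diag, Matrix.mul_apply, kronPow, Matrix.of_apply]
    congr 1; ext g; congr 1; ext h; rw [← Finset.prod_mul_distrib]
  rw [h, sum_sum_prod fun _ s t => A s t * B t s, Finset.prod_const]
  have : (A * B).trace = ∑ s, ∑ t, A s t * B t s := by
    simp only [Matrix.trace, Matrix.diag, Matrix.mul_apply]
  rw [this]
  simp

lemma trace_pure {N : ℕ} (v : Fin N → Fin 2 → ℂ) (σ : Matrix (Fin 2) (Fin 2) ℂ) :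
    (pureMat v * kronPow (N := N) σ).trace
      = ∏ j, ∑ s, ∑ t, v j s * conj (v j t) * σ t s := by
  have h : (pureMat v * kronPow (N := N) σ).trace
      = ∑ g : Fin N → Fin 2, ∑ h : Fin N → Fin 2,
          ∏ j, v j (g j) * conj (v j (h j)) * σ (h j) (g j) := by
    rw [Matrix.trace]
    simp only [Matrix.diag, Matrix.mul_apply, kronPow, pureMat, Matrix.of_apply]
    congr 1; ext g; congr 1; ext h; rw [← Finset.prod_mul_distrib]
  rw [h, sum_sum_prod fun j s t => v j s * conj (v j t) * σ t s]

def chiR : Fin 2 → ℝ := fun s => if s = 0 then 1 else -1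
def chiC : Fin 2 → ℂ := fun s => if s = 0 then 1 else -1

lemma chiC_eq (s : Fin 2) : chiC s = ((chiR s : ℝ) : ℂ) := by
  unfold chiC chiR; split <;> simp

lemma abs_chiR (s : Fin 2) : |chiR s| = 1 := by
  unfold chiR; split <;> norm_num

lemma abs_prod_chiR {N : ℕ} (f : Fin N → Fin 2) : |∏ j, chiR (f j)| = 1 := by
  rw [Finset.abs_prod]
  simp [abs_chiR]

lemma sum_prod_chiR {N : ℕ} (hN : 1 ≤ N) : ∑ f : Fin N → Fin 2, ∏ j, chiR (f j) = 0 := by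
  have h := Finset.prod_univ_sum (fun _ : Fin N => (Finset.univ : Finset (Fin 2)))
    (fun _ s => chiR s)
  rw [Fintype.piFinset_univ] at h
  rw [← h]
  have h2 : ∑ s, chiR s = 0 := by simp [chiR, Fin.sum_univ_two]
  rw [Finset.prod_congr rfl fun j _ => h2, Finset.prod_const]
  exact zero_pow (by simp [Finset.card_univ]; omega)

lemma kron_eq_sum {N : ℕ} (w : Fin 2 → Fin 2 → ℂ) (κ : Fin 2 → ℂ)
    (A : Matrix (Fin 2) (Fin 2) ℂ)
    (hA : ∀ i i', A i i' = ∑ s, κ s * (w s i * conj (w s i'))) :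
    kronPow (N := N) A
      = ∑ f : Fin N → Fin 2, (∏ j, κ (f j)) • pureMat (fun j => w (f j)) := by
  ext g h
  simp only [kronPow, Matrix.of_apply, Matrix.sum_apply, Matrix.smul_apply, pureMat,
    smul_eq_mul]
  calc ∏ j, A (g j) (h j)
      = ∏ j, ∑ s, κ s * (w s (g j) * conj (w s (h j))) :=
        Finset.prod_congr rfl fun j _ => by rw [hA]
    _ = ∑ f ∈ Fintype.piFinset (fun _ : Fin N => (Finset.univ : Finset (Fin 2))),
          ∏ j, κ (f j) * (w (f j) (g j) * conj (w (f j) (h j))) :=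
        Finset.prod_univ_sum _ _
    _ = ∑ f : Fin N → Fin 2, (∏ j, κ (f j)) * ∏ j, w (f j) (g j) * conj (w (f j) (h j)) := by
        rw [Fintype.piFinset_univ]
        exact Finset.sum_congr rfl fun f _ => Finset.prod_mul_distrib

lemma mix_mem {N : ℕ} (w : Fin 2 → Fin 2 → ℂ)
    (hw : ∀ s, ∑ i, ‖w s i‖ ^ 2 = 1)
    (μ : (Fin N → Fin 2) → ℝ) (h0 : ∀ f, 0 ≤ μ f) (h1 : ∑ f, μ f = 1) :
    (∑ f, μ f • pureMat (N := N) (fun j => w (f j))) ∈ convexHull ℝ (pureSet N) := by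
  refine Convex.sum_mem (convex_convexHull ℝ _) (fun f _ => h0 f) h1 ?_
  intro f _
  apply subset_convexHull
  exact ⟨fun j => w (f j), fun j => hw (f j), rfl⟩

lemma state_mem {N : ℕ} (hN : 1 ≤ N) (w : Fin 2 → Fin 2 → ℂ)
    (hw : ∀ s, ∑ i, ‖w s i‖ ^ 2 = 1)
    (σ : Matrix (Fin 2) (Fin 2) ℂ)
    (h1 : ∀ i i', (1 : Matrix (Fin 2) (Fin 2) ℂ) i i'
        = ∑ s, (1 : ℂ) * (w s i * conj (w s i')))
    (hσ : ∀ i i', σ i i' = ∑ s, chiC s * (w s i * conj (w s i')))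
    (ε : ℝ) (hε : |ε| ≤ 1) :
    ((2 : ℂ) ^ N)⁻¹ • (kronPow (N := N) 1 + (ε : ℂ) • kronPow σ)
      ∈ convexHull ℝ (pureSet N) := by
  have hA := kron_eq_sum (N := N) w (fun _ => (1 : ℂ)) 1 h1
  have hB := kron_eq_sum (N := N) w chiC σ hσ
  set μ : (Fin N → Fin 2) → ℝ :=
    fun f => ((2 : ℝ) ^ N)⁻¹ * (1 + ε * ∏ j, chiR (f j)) with hμ
  have key : ((2 : ℂ) ^ N)⁻¹ • (kronPow (N := N) 1 + (ε : ℂ) • kronPow σ)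
      = ∑ f, μ f • pureMat (fun j => w (f j)) := by
    rw [hA, hB]
    ext g h
    simp only [Matrix.smul_apply, Matrix.add_apply, Matrix.sum_apply, smul_eq_mul]
    rw [Finset.mul_sum, mul_add, Finset.mul_sum, Finset.mul_sum, ← Finset.sum_add_distrib]
    refine Finset.sum_congr rfl fun f _ => ?_
    have hc : (∏ j, chiC (f j)) = ((∏ j, chiR (f j) : ℝ) : ℂ) := by
      rw [Complex.ofReal_prod]
      exact Finset.prod_congr rfl fun j _ => chiC_eq (f j)
    rw [Complex.real_smul]
    push_cast [hμ, hc]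
    rw [Finset.prod_const_one]
    ring
  rw [key]
  refine mix_mem w hw μ (fun f => ?_) ?_
  · have h1' : |ε * ∏ j, chiR (f j)| ≤ 1 := by
      rw [abs_mul, abs_prod_chiR]; simpa using hε
    have h2 := abs_le.mp h1'
    have h3 : (0:ℝ) ≤ 1 + ε * ∏ j, chiR (f j) := by linarith [h2.1]
    positivity
  · simp only [hμ]
    rw [← Finset.mul_sum, Finset.sum_add_distrib, Finset.sum_const, ← Finset.mul_sum,
      sum_prod_chiR hN]
    simp [Finset.card_univ]

noncomputable def rt : ℂ := (((Real.sqrt 2)⁻¹ : ℝ) : ℂ)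

lemma rt_mul_rt : rt * rt = 2⁻¹ := by
  unfold rt
  rw [← Complex.ofReal_mul]
  have h : (Real.sqrt 2)⁻¹ * (Real.sqrt 2)⁻¹ = 2⁻¹ := by
    rw [← mul_inv, Real.mul_self_sqrt (by norm_num)]
  rw [h]
  norm_num

lemma rt_sq : rt ^ 2 = 2⁻¹ := by rw [sq, rt_mul_rt]

lemma conj_rt : conj rt = rt := Complex.conj_ofReal _

noncomputable def wZ : Fin 2 → Fin 2 → ℂ := fun s i => if i = s then 1 else 0
noncomputable def wX : Fin 2 → Fin 2 → ℂ := fun s i =>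
  rt * (if s = 1 ∧ i = 1 then -1 else 1)
noncomputable def wY : Fin 2 → Fin 2 → ℂ := fun s i =>
  rt * (if i = 1 then (if s = 0 then Complex.I else -Complex.I) else 1)

lemma abs_rt : ‖rt‖ = (Real.sqrt 2)⁻¹ := by
  unfold rt
  rw [Complex.norm_real, Real.norm_eq_abs, abs_of_nonneg (by positivity)]

lemma sq_abs_rt : ‖rt‖ ^ 2 = 2⁻¹ := by
  rw [abs_rt, ← Real.sqrt_inv, Real.sq_sqrt (by norm_num)]

lemma wZ_norm : ∀ s, ∑ i, ‖wZ s i‖ ^ 2 = 1 := by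
  intro s
  fin_cases s <;> simp [wZ, Fin.sum_univ_two]

lemma wX_norm : ∀ s, ∑ i, ‖wX s i‖ ^ 2 = 1 := by
  intro s
  fin_cases s <;>
    simp [wX, Fin.sum_univ_two, map_mul, mul_pow, sq_abs_rt] <;> norm_num

lemma wY_norm : ∀ s, ∑ i, ‖wY s i‖ ^ 2 = 1 := by
  intro s
  fin_cases s <;>
    simp [wY, Fin.sum_univ_two, map_mul, mul_pow, sq_abs_rt] <;> norm_num

lemma wZ_res1 : ∀ i i', (1 : Matrix (Fin 2) (Fin 2) ℂ) i i'
    = ∑ s, (1 : ℂ) * (wZ s i * conj (wZ s i')) := by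
  intro i i'
  fin_cases i <;> fin_cases i' <;>
    simp [wZ, Fin.sum_univ_two, Matrix.one_apply]

lemma wZ_res : ∀ i i', (!![1, 0; 0, -1] : Matrix (Fin 2) (Fin 2) ℂ) i i'
    = ∑ s, chiC s * (wZ s i * conj (wZ s i')) := by
  intro i i'
  fin_cases i <;> fin_cases i' <;>
    simp [wZ, chiC, Fin.sum_univ_two]

lemma wX_res1 : ∀ i i', (1 : Matrix (Fin 2) (Fin 2) ℂ) i i'
    = ∑ s, (1 : ℂ) * (wX s i * conj (wX s i')) := by
  intro i i'
  fin_cases i <;> fin_cases i' <;>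
    simp [wX, Fin.sum_univ_two, Matrix.one_apply, map_mul, conj_rt] <;>
    ring_nf <;> try norm_num [rt_sq]

lemma wX_res : ∀ i i', (!![0, 1; 1, 0] : Matrix (Fin 2) (Fin 2) ℂ) i i'
    = ∑ s, chiC s * (wX s i * conj (wX s i')) := by
  intro i i'
  fin_cases i <;> fin_cases i' <;>
    simp [wX, chiC, Fin.sum_univ_two, map_mul, conj_rt] <;>
    ring_nf <;> try norm_num [rt_sq]

lemma wY_res1 : ∀ i i', (1 : Matrix (Fin 2) (Fin 2) ℂ) i i'
    = ∑ s, (1 : ℂ) * (wY s i * conj (wY s i')) := by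
  intro i i'
  fin_cases i <;> fin_cases i' <;>
    simp [wY, Fin.sum_univ_two, Matrix.one_apply, map_mul, conj_rt, Complex.conj_I] <;>
    ring_nf <;> try norm_num [rt_sq, Complex.I_sq]

lemma wY_res : ∀ i i', (!![0, -Complex.I; Complex.I, 0] : Matrix (Fin 2) (Fin 2) ℂ) i i'
    = ∑ s, chiC s * (wY s i * conj (wY s i')) := by
  intro i i'
  fin_cases i <;> fin_cases i' <;>
    simp [wY, chiC, Fin.sum_univ_two, map_mul, conj_rt, Complex.conj_I] <;>
    ring_nf <;> (try norm_num [rt_sq, Complex.I_sq]) <;> ring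

/-- Bloch coordinate traces for a pure product state. -/
lemma pure_trace_z {N : ℕ} (v : Fin N → Fin 2 → ℂ) :
    (pureMat v * kronPow (N := N) !![1, 0; 0, -1]).trace
      = ((∏ j, (Complex.normSq (v j 0) - Complex.normSq (v j 1)) : ℝ) : ℂ) := by
  rw [trace_pure, Complex.ofReal_prod]
  refine Finset.prod_congr rfl fun j _ => ?_
  simp only [Fin.sum_univ_two]
  simp [Complex.mul_conj]
  push_cast
  ring

lemma pure_trace_x {N : ℕ} (v : Fin N → Fin 2 → ℂ) :
    (pureMat v * kronPow (N := N) !![0, 1; 1, 0]).trace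
      = ((∏ j, (2 * (v j 0 * conj (v j 1)).re) : ℝ) : ℂ) := by
  rw [trace_pure, Complex.ofReal_prod]
  refine Finset.prod_congr rfl fun j _ => ?_
  simp only [Fin.sum_univ_two]
  have hconj : v j 1 * conj (v j 0) = conj (v j 0 * conj (v j 1)) := by
    rw [map_mul, Complex.conj_conj]; ring
  simp
  rw [hconj, Complex.add_conj]
  simp [Complex.mul_re]

lemma pure_trace_y {N : ℕ} (v : Fin N → Fin 2 → ℂ) :
    (pureMat v * kronPow (N := N) !![0, -Complex.I; Complex.I, 0]).trace
      = ((∏ j, (-2 * (v j 0 * conj (v j 1)).im) : ℝ) : ℂ) := by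
  rw [trace_pure, Complex.ofReal_prod]
  refine Finset.prod_congr rfl fun j _ => ?_
  simp only [Fin.sum_univ_two]
  have hconj : v j 1 * conj (v j 0) = conj (v j 0 * conj (v j 1)) := by
    rw [map_mul, Complex.conj_conj]; ring
  simp [Complex.ext_iff, Complex.mul_re, Complex.mul_im]
  constructor <;> ring

lemma key_bound {N : ℕ} (hN : 2 ≤ N) (Z X Y : Fin N → ℝ)
    (h : ∀ j, Z j ^ 2 + X j ^ 2 + Y j ^ 2 ≤ 1) :
    |∏ j, Z j| + |∏ j, X j| + |∏ j, Y j| ≤ 1 := by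
  set i0 : Fin N := ⟨0, by omega⟩ with hi0
  set i1 : Fin N := ⟨1, by omega⟩ with hi1
  have hne : i0 ≠ i1 := by simp [hi0, hi1, Fin.ext_iff]
  have hb : ∀ T : Fin N → ℝ, (∀ j, T j ^ 2 ≤ 1) → |∏ j, T j| ≤ |T i0| * |T i1| := by
    intro T hT
    have hT1 : ∀ j, |T j| ≤ 1 := by
      intro j
      nlinarith [sq_abs (T j), abs_nonneg (T j), hT j]
    rw [Finset.abs_prod]
    have hsub : ({i0, i1} : Finset (Fin N)) ⊆ Finset.univ := Finset.subset_univ _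
    rw [← Finset.prod_sdiff hsub, Finset.prod_pair hne]
    have h1 : ∏ j ∈ Finset.univ \ {i0, i1}, |T j| ≤ 1 :=
      Finset.prod_le_one (fun j _ => abs_nonneg _) (fun j _ => hT1 j)
    have h2 : (0:ℝ) ≤ |T i0| * |T i1| := by positivity
    nlinarith [Finset.prod_nonneg (s := Finset.univ \ {i0, i1})
      (fun j (_ : j ∈ Finset.univ \ {i0, i1}) => abs_nonneg (T j))]
  have hZ := hb Z (fun j => by nlinarith [h j, sq_nonneg (X j), sq_nonneg (Y j)])
  have hX := hb X (fun j => by nlinarith [h j, sq_nonneg (Z j), sq_nonneg (Y j)])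
  have hY := hb Y (fun j => by nlinarith [h j, sq_nonneg (Z j), sq_nonneg (X j)])
  have h0 := h i0
  have h1 := h i1
  nlinarith [sq_nonneg (|Z i0| - |Z i1|), sq_nonneg (|X i0| - |X i1|),
    sq_nonneg (|Y i0| - |Y i1|), sq_abs (Z i0), sq_abs (Z i1), sq_abs (X i0),
    sq_abs (X i1), sq_abs (Y i0), sq_abs (Y i1)]

lemma hull_eq_set {N : ℕ} :
    convexHull ℝ {M : Matrix (Fin N → Fin 2) (Fin N → Fin 2) ℂ |
        ∃ v : Fin N → Fin 2 → ℂ,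
          (∀ j, ∑ i, ‖v j i‖ ^ 2 = 1) ∧
          M = Matrix.of fun f g => ∏ j, v j (f j) * conj (v j (g j))}
      = convexHull ℝ (pureSet N) := rfl

end GenSmolin
theorem generalized_smolin_separable_iff
    (N : ℕ) (hN : 2 ≤ N)
    (σ₀ σz σx σy : Matrix (Fin 2) (Fin 2) ℂ)
    (h₀ : σ₀ = 1) (hz : σz = !![1, 0; 0, -1]) (hx : σx = !![0, 1; 1, 0])
    (hy : σy = !![0, -Complex.I; Complex.I, 0])
    (a b c : ℝ)
    (ρ : Matrix (Fin N → Fin 2) (Fin N → Fin 2) ℂ)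
    (hρ : ρ = ((2 : ℂ) ^ N)⁻¹ •
      (kronPow σ₀ + (a : ℂ) • kronPow σz + (b : ℂ) • kronPow σx +
        (c : ℂ) • kronPow σy)) :
    ρ ∈ convexHull ℝ {M : Matrix (Fin N → Fin 2) (Fin N → Fin 2) ℂ |
        ∃ v : Fin N → Fin 2 → ℂ,
          (∀ j, ∑ i, ‖v j i‖ ^ 2 = 1) ∧
          M = Matrix.of fun f g => ∏ j, v j (f j) * conj (v j (g j))} ↔
      |a| + |b| + |c| ≤ 1 := by
  have hN0 : N ≠ 0 := by omega
  subst h₀ hz hx hy hρ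
  constructor
  · -- separable → |a|+|b|+|c| ≤ 1
    intro hmem
    rw [GenSmolin.hull_eq_set (N := N)] at hmem
    rw [mem_convexHull_iff_exists_fintype] at hmem
    obtain ⟨ι, hι, wgt, z, hw0, hw1, hzS, hsum⟩ := hmem
    choose v hv hzv using hzS
    have tr_mix : ∀ σM : Matrix (Fin 2) (Fin 2) ℂ,
        ((∑ i, wgt i • z i) * kronPow (N := N) σM).trace
          = ∑ i, (wgt i : ℂ) * (GenSmolin.pureMat (v i) * kronPow (N := N) σM).trace := by
      intro σM
      rw [Matrix.sum_mul, Matrix.trace_sum]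
      refine Finset.sum_congr rfl fun i _ => ?_
      rw [Matrix.smul_mul, Matrix.trace_smul, hzv i, Complex.real_smul]
      rfl
    have expand : ∀ σM : Matrix (Fin 2) (Fin 2) ℂ,
        ((((2:ℂ)^N)⁻¹ • (kronPow (N := N) 1 + (a:ℂ) • kronPow !![1,0;0,-1]
            + (b:ℂ) • kronPow !![0,1;1,0]
            + (c:ℂ) • kronPow !![0,-Complex.I;Complex.I,0])) * kronPow σM).trace
          = ((2:ℂ)^N)⁻¹ * ((((1 : Matrix (Fin 2) (Fin 2) ℂ) * σM).trace)^N
            + (a:ℂ) * (((!![1,0;0,-1] : Matrix (Fin 2) (Fin 2) ℂ) * σM).trace)^N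
            + (b:ℂ) * (((!![0,1;1,0] : Matrix (Fin 2) (Fin 2) ℂ) * σM).trace)^N
            + (c:ℂ) * (((!![0,-Complex.I;Complex.I,0] : Matrix (Fin 2) (Fin 2) ℂ)
                * σM).trace)^N) := by
      intro σM
      rw [Matrix.smul_mul, Matrix.trace_smul, Matrix.add_mul, Matrix.add_mul, Matrix.add_mul,
        Matrix.smul_mul, Matrix.smul_mul, Matrix.smul_mul, Matrix.trace_add, Matrix.trace_add,
        Matrix.trace_add, Matrix.trace_smul, Matrix.trace_smul, Matrix.trace_smul,
        GenSmolin.trace_kron_mul, GenSmolin.trace_kron_mul, GenSmolin.trace_kron_mul,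
        GenSmolin.trace_kron_mul]
      simp only [smul_eq_mul]
    -- 2×2 trace values
    have t1z : ((1 : Matrix (Fin 2) (Fin 2) ℂ) * !![1,0;0,-1]).trace = 0 := by
      norm_num [Matrix.trace_fin_two, Matrix.mul_apply, Fin.sum_univ_two]
    have t1x : ((1 : Matrix (Fin 2) (Fin 2) ℂ) * !![0,1;1,0]).trace = 0 := by
      norm_num [Matrix.trace_fin_two, Matrix.mul_apply, Fin.sum_univ_two]
    have t1y : ((1 : Matrix (Fin 2) (Fin 2) ℂ) * !![0,-Complex.I;Complex.I,0]).trace = 0 := by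
      norm_num [Matrix.trace_fin_two, Matrix.mul_apply, Fin.sum_univ_two]
    have tzz : ((!![1,0;0,-1] : Matrix (Fin 2) (Fin 2) ℂ) * !![1,0;0,-1]).trace = 2 := by
      norm_num [Matrix.trace_fin_two, Matrix.mul_apply, Fin.sum_univ_two]
    have tzx : ((!![1,0;0,-1] : Matrix (Fin 2) (Fin 2) ℂ) * !![0,1;1,0]).trace = 0 := by
      norm_num [Matrix.trace_fin_two, Matrix.mul_apply, Fin.sum_univ_two]
    have tzy : ((!![1,0;0,-1] : Matrix (Fin 2) (Fin 2) ℂ)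
        * !![0,-Complex.I;Complex.I,0]).trace = 0 := by
      norm_num [Matrix.trace_fin_two, Matrix.mul_apply, Fin.sum_univ_two]
    have txz : ((!![0,1;1,0] : Matrix (Fin 2) (Fin 2) ℂ) * !![1,0;0,-1]).trace = 0 := by
      norm_num [Matrix.trace_fin_two, Matrix.mul_apply, Fin.sum_univ_two]
    have txx : ((!![0,1;1,0] : Matrix (Fin 2) (Fin 2) ℂ) * !![0,1;1,0]).trace = 2 := by
      norm_num [Matrix.trace_fin_two, Matrix.mul_apply, Fin.sum_univ_two]
    have txy : ((!![0,1;1,0] : Matrix (Fin 2) (Fin 2) ℂ)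
        * !![0,-Complex.I;Complex.I,0]).trace = 0 := by
      norm_num [Matrix.trace_fin_two, Matrix.mul_apply, Fin.sum_univ_two]
    have tyz : ((!![0,-Complex.I;Complex.I,0] : Matrix (Fin 2) (Fin 2) ℂ)
        * !![1,0;0,-1]).trace = 0 := by
      norm_num [Matrix.trace_fin_two, Matrix.mul_apply, Fin.sum_univ_two]
    have tyx : ((!![0,-Complex.I;Complex.I,0] : Matrix (Fin 2) (Fin 2) ℂ)
        * !![0,1;1,0]).trace = 0 := by
      norm_num [Matrix.trace_fin_two, Matrix.mul_apply, Fin.sum_univ_two]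
    have tyy : ((!![0,-Complex.I;Complex.I,0] : Matrix (Fin 2) (Fin 2) ℂ)
        * !![0,-Complex.I;Complex.I,0]).trace = 2 := by
      norm_num [Matrix.trace_fin_two, Matrix.mul_apply, Fin.sum_univ_two,
        Complex.ext_iff]
    have hpow : ((2:ℂ)^N)⁻¹ * ((0:ℂ)^N + (a:ℂ) * 2^N + (b:ℂ) * 0^N + (c:ℂ) * 0^N)
        = (a:ℂ) := by
      rw [zero_pow hN0]
      have : ((2:ℂ)^N) ≠ 0 := pow_ne_zero _ two_ne_zero
      field_simp
      ring
    -- the three real identities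
    have haR : a = ∑ i, wgt i * ∏ j,
        (Complex.normSq (v i j 0) - Complex.normSq (v i j 1)) := by
      have e1 := tr_mix !![1,0;0,-1]
      rw [hsum, expand _, t1z, tzz, txz, tyz] at e1
      rw [hpow] at e1
      simp_rw [GenSmolin.pure_trace_z] at e1
      exact_mod_cast e1
    have hbR : b = ∑ i, wgt i * ∏ j, (2 * (v i j 0 * conj (v i j 1)).re) := by
      have e1 := tr_mix !![0,1;1,0]
      rw [hsum, expand _, t1x, tzx, txx, tyx] at e1
      have hpow' : ((2:ℂ)^N)⁻¹ * ((0:ℂ)^N + (a:ℂ) * 0^N + (b:ℂ) * 2^N + (c:ℂ) * 0^N)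
          = (b:ℂ) := by
        rw [zero_pow hN0]
        have : ((2:ℂ)^N) ≠ 0 := pow_ne_zero _ two_ne_zero
        field_simp
        ring
      rw [hpow'] at e1
      simp_rw [GenSmolin.pure_trace_x] at e1
      exact_mod_cast e1
    have hcR : c = ∑ i, wgt i * ∏ j, (-2 * (v i j 0 * conj (v i j 1)).im) := by
      have e1 := tr_mix !![0,-Complex.I;Complex.I,0]
      rw [hsum, expand _, t1y, tzy, txy, tyy] at e1
      have hpow' : ((2:ℂ)^N)⁻¹ * ((0:ℂ)^N + (a:ℂ) * 0^N + (b:ℂ) * 0^N + (c:ℂ) * 2^N)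
          = (c:ℂ) := by
        rw [zero_pow hN0]
        have : ((2:ℂ)^N) ≠ 0 := pow_ne_zero _ two_ne_zero
        field_simp
        ring
      rw [hpow'] at e1
      simp_rw [GenSmolin.pure_trace_y] at e1
      exact_mod_cast e1
    -- per-term bound
    have hper : ∀ i : ι,
        |∏ j, (Complex.normSq (v i j 0) - Complex.normSq (v i j 1))|
          + |∏ j, (2 * (v i j 0 * conj (v i j 1)).re)|
          + |∏ j, (-2 * (v i j 0 * conj (v i j 1)).im)| ≤ 1 := by
      intro i
      refine GenSmolin.key_bound hN _ _ _ (fun j => ?_)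
      have h1 := hv i j
      rw [Fin.sum_univ_two] at h1
      rw [Complex.sq_norm, Complex.sq_norm] at h1
      have hz2 : (v i j 0 * conj (v i j 1)).re^2 + (v i j 0 * conj (v i j 1)).im^2
          = Complex.normSq (v i j 0) * Complex.normSq (v i j 1) := by
        have h2 := Complex.normSq_mul (v i j 0) (conj (v i j 1))
        rw [Complex.normSq_conj] at h2
        rw [← h2]
        rw [Complex.normSq_apply]
        ring
      nlinarith [Complex.normSq_nonneg (v i j 0), Complex.normSq_nonneg (v i j 1)]
    have habs : ∀ P : ι → ℝ, |∑ i, wgt i * P i| ≤ ∑ i, wgt i * |P i| := by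
      intro P
      refine (Finset.abs_sum_le_sum_abs _ _).trans (le_of_eq ?_)
      exact Finset.sum_congr rfl fun i _ => by rw [abs_mul, abs_of_nonneg (hw0 i)]
    calc |a| + |b| + |c|
        ≤ (∑ i, wgt i * |∏ j, (Complex.normSq (v i j 0) - Complex.normSq (v i j 1))|)
          + (∑ i, wgt i * |∏ j, (2 * (v i j 0 * conj (v i j 1)).re)|)
          + (∑ i, wgt i * |∏ j, (-2 * (v i j 0 * conj (v i j 1)).im)|) := by
          rw [haR, hbR, hcR]
          exact add_le_add (add_le_add (habs _) (habs _)) (habs _)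
      _ = ∑ i, wgt i * (|∏ j, (Complex.normSq (v i j 0) - Complex.normSq (v i j 1))|
            + |∏ j, (2 * (v i j 0 * conj (v i j 1)).re)|
            + |∏ j, (-2 * (v i j 0 * conj (v i j 1)).im)|) := by
          rw [← Finset.sum_add_distrib, ← Finset.sum_add_distrib]
          exact Finset.sum_congr rfl fun i _ => by ring
      _ ≤ ∑ i, wgt i * 1 :=
          Finset.sum_le_sum fun i _ => mul_le_mul_of_nonneg_left (hper i) (hw0 i)
      _ = 1 := by simp [hw1]
  · -- |a|+|b|+|c| ≤ 1 → separable
    intro hle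
    have hN1 : 1 ≤ N := by omega
    set εa : ℝ := if a < 0 then -1 else 1 with hεa
    set εb : ℝ := if b < 0 then -1 else 1 with hεb
    set εc : ℝ := if c < 0 then -1 else 1 with hεc
    have haε : |a| * εa = a := by
      rw [hεa]; split_ifs with h
      · rw [abs_of_neg h]; ring
      · rw [abs_of_nonneg (not_lt.mp h)]; ring
    have hbε : |b| * εb = b := by
      rw [hεb]; split_ifs with h
      · rw [abs_of_neg h]; ring
      · rw [abs_of_nonneg (not_lt.mp h)]; ring
    have hcε : |c| * εc = c := by
      rw [hεc]; split_ifs with h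
      · rw [abs_of_neg h]; ring
      · rw [abs_of_nonneg (not_lt.mp h)]; ring
    have hεa1 : |εa| ≤ 1 := by rw [hεa]; split_ifs <;> norm_num
    have hεb1 : |εb| ≤ 1 := by rw [hεb]; split_ifs <;> norm_num
    have hεc1 : |εc| ≤ 1 := by rw [hεc]; split_ifs <;> norm_num
    have mem0 := GenSmolin.state_mem (N := N) hN1 GenSmolin.wZ GenSmolin.wZ_norm _
      GenSmolin.wZ_res1 GenSmolin.wZ_res 0 (by norm_num)
    have memz := GenSmolin.state_mem (N := N) hN1 GenSmolin.wZ GenSmolin.wZ_norm _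
      GenSmolin.wZ_res1 GenSmolin.wZ_res εa hεa1
    have memx := GenSmolin.state_mem (N := N) hN1 GenSmolin.wX GenSmolin.wX_norm _
      GenSmolin.wX_res1 GenSmolin.wX_res εb hεb1
    have memy := GenSmolin.state_mem (N := N) hN1 GenSmolin.wY GenSmolin.wY_norm _
      GenSmolin.wY_res1 GenSmolin.wY_res εc hεc1
    rw [GenSmolin.hull_eq_set (N := N)]
    have key := Convex.sum_mem (t := (Finset.univ : Finset (Fin 4)))
      (convex_convexHull ℝ (GenSmolin.pureSet N))
      (w := ![1 - |a| - |b| - |c|, |a|, |b|, |c|])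
      (z := ![((2 : ℂ) ^ N)⁻¹ • (kronPow (N := N) 1
            + ((0:ℝ) : ℂ) • kronPow !![1,0;0,-1]),
          ((2 : ℂ) ^ N)⁻¹ • (kronPow (N := N) 1 + (εa : ℂ) • kronPow !![1,0;0,-1]),
          ((2 : ℂ) ^ N)⁻¹ • (kronPow (N := N) 1 + (εb : ℂ) • kronPow !![0,1;1,0]),
          ((2 : ℂ) ^ N)⁻¹ • (kronPow (N := N) 1
            + (εc : ℂ) • kronPow !![0,-Complex.I;Complex.I,0])])
      (fun i _ => by
        fin_cases i <;> simp <;>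
          linarith [abs_nonneg a, abs_nonneg b, abs_nonneg c, hle])
      (by rw [Fin.sum_univ_four]; simp; ring)
      (fun i _ => by
        fin_cases i
        · simpa using mem0
        · simpa using memz
        · simpa using memx
        · simpa using memy)
    rw [Fin.sum_univ_four] at key
    simp only [Matrix.cons_val_zero, Matrix.cons_val_one, Matrix.head_cons,
      Matrix.cons_val_two, Matrix.tail_cons, Matrix.cons_val_three, Matrix.head_fin_const]
      at key
    convert key using 1
    have haC : ((|a| : ℝ) : ℂ) * ((εa : ℝ) : ℂ) = ((a : ℝ) : ℂ) := by
      rw [← Complex.ofReal_mul, haε]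
    have hbC : ((|b| : ℝ) : ℂ) * ((εb : ℝ) : ℂ) = ((b : ℝ) : ℂ) := by
      rw [← Complex.ofReal_mul, hbε]
    have hcC : ((|c| : ℝ) : ℂ) * ((εc : ℝ) : ℂ) = ((c : ℝ) : ℂ) := by
      rw [← Complex.ofReal_mul, hcε]
    ext g h
    simp only [Matrix.smul_apply, Matrix.add_apply, smul_eq_mul, Complex.real_smul]
    push_cast
    linear_combination (-((2:ℂ)^N)⁻¹ * (kronPow (N := N) !![1,0;0,-1] g h)) * haC
      + (-((2:ℂ)^N)⁻¹ * (kronPow (N := N) !![0,1;1,0] g h)) * hbC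
      + (-((2:ℂ)^N)⁻¹ * (kronPow (N := N) !![0,-Complex.I;Complex.I,0] g h)) * hcC
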